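/- In the limit σ_cov² → 0 the separated-receiver SPS rate-energy region converges to the upper-bound box: for every ε > 0 and every target energy Q < ζhP with ζ = 1, there exists ρ ∈ [0,1) with ρζhP ≥ Q and log₂(1 + (1-ρ)hP/((1-ρ)σ_A² + σ_cov²)) ≥ log₂(1 + hP/σ_A²) − ε for all sufficiently small σ_cov² > 0. -/

import Mathlib

/-- As `σ_cov² → 0`, the separated-receiver SPS rate-energy region (with `ζ = 1`)
approaches the upper-bound box: for any `ε > 0` and any target energy `Q < hP`,
some `ρ ∈ [0,1)` harvests at least `Q` while the rate is within `ε` of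
`log₂(1 + hP/σ_A²)` for all sufficiently small `σ_cov² > 0`. -/
theorem sps_approaches_upper_bound (h P sA : ℝ) (hh : 0 < h) (hP : 0 < P)
    (hsA : 0 < sA) (ε : ℝ) (hε : 0 < ε) (Q : ℝ) (hQ : Q < 1 * h * P) :
    ∃ ρ : ℝ, ρ ∈ Set.Ico (0:ℝ) 1 ∧ ρ * (1 * h * P) ≥ Q ∧
      ∃ δ : ℝ, 0 < δ ∧ ∀ scov : ℝ, 0 < scov → scov < δ →
        Real.logb 2 (1 + (1 - ρ) * h * P / ((1 - ρ) * sA + scov)) ≥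
          Real.logb 2 (1 + h * P / sA) - ε := by
  have hhP : 0 < h * P := mul_pos hh hP
  set ρ := max 0 (Q / (h * P)) with hρdef
  have hρ0 : 0 ≤ ρ := le_max_left _ _
  have hρ1 : ρ < 1 := by
    apply max_lt one_pos
    rw [div_lt_one hhP]
    linarith
  have hc : 0 < 1 - ρ := by linarith
  refine ⟨ρ, ⟨hρ0, hρ1⟩, ?_, ?_⟩
  · have : Q / (h * P) ≤ ρ := le_max_right _ _
    have := (div_le_iff₀ hhP).mp this
    calc Q ≤ ρ * (h * P) := this
      _ = ρ * (1 * h * P) := by ring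
  · -- continuity argument
    set c := 1 - ρ with hcdef
    have hden : c * sA ≠ 0 := by positivity
    have hinner : ContinuousAt (fun s : ℝ => 1 + c * h * P / (c * sA + s)) 0 := by
      apply ContinuousAt.add continuousAt_const
      apply ContinuousAt.div continuousAt_const
      · exact ContinuousAt.add continuousAt_const continuousAt_id
      · simpa using hden
    have hne : (1 + c * h * P / (c * sA + 0)) ≠ 0 := by
      have : 0 < c * h * P / (c * sA + 0) := by
        apply div_pos (by positivity)
        simpa using mul_pos hc hsA
      positivity
    have hF : ContinuousAt (fun s : ℝ => Real.logb 2 (1 + c * h * P / (c * sA + s))) 0 := by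
      exact ContinuousAt.comp (x := (0:ℝ)) (g := Real.logb 2)
        (f := fun s => 1 + c * h * P / (c * sA + s)) (Real.continuousAt_logb hne) hinner
    have hF0 : Real.logb 2 (1 + c * h * P / (c * sA + 0)) = Real.logb 2 (1 + h * P / sA) := by
      congr 1
      rw [add_zero]
      congr 1
      field_simp
    rw [Metric.continuousAt_iff] at hF
    obtain ⟨δ, hδ, hball⟩ := hF ε hε
    refine ⟨δ, hδ, fun scov hs hsδ => ?_⟩
    have hd : dist scov 0 < δ := by
      rw [Real.dist_eq, sub_zero, abs_of_pos hs]; exact hsδ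
    have := hball hd
    rw [Real.dist_eq, hF0] at this
    have := abs_lt.mp this
    linarith [this.1]
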